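/- The only rational points on the genus 1 curve 5 Y^2 = X^4 − 10 X^2 + 5 are (X, Y) = (0, 1) and (0, −1). -/

import Mathlib

private lemma both_pos' {x y : ℤ} (h : 0 < x * y) (h2 : 0 < x + y) : 0 < x ∧ 0 < y := by
  constructor <;> nlinarith

private lemma one_le_sq' {m : ℤ} (h : m ≠ 0) : 1 ≤ m ^ 2 := by
  rcases lt_or_gt_of_ne h with h | h <;> nlinarith

private lemma sq_zero' {m : ℤ} (h : m ^ 2 = 0) : m = 0 := by
  nlinarith [sq_nonneg m]

private lemma pow4aux {a b u : ℤ} (hab : IsCoprime a b) (h : a * b = u ^ 4)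
    (ha : 0 < a) (hb : 0 < b) : ∃ c d : ℤ, a = c ^ 4 ∧ b = d ^ 4 := by
  obtain ⟨c, hc⟩ := exists_associated_pow_of_mul_eq_pow' hab h
  obtain ⟨d, hd⟩ := exists_associated_pow_of_mul_eq_pow' hab.symm (by rwa [mul_comm] at h)
  have hc4 : (0:ℤ) ≤ c ^ 4 := by positivity
  have hd4 : (0:ℤ) ≤ d ^ 4 := by positivity
  rcases Int.associated_iff.mp hc with hc' | hc' <;>
    rcases Int.associated_iff.mp hd with hd' | hd'
  · exact ⟨c, d, hc'.symm, hd'.symm⟩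
  all_goals exfalso; linarith

private lemma pow4one {a b u : ℤ} (hab : IsCoprime a b) (h : a * b = 125 * u ^ 4)
    (ha : 0 < a) (hb : 0 < b) (h5 : ¬ (5:ℤ) ∣ a) :
    ∃ c d : ℤ, c ^ 2 * d ^ 2 = u ^ 2 ∧ a = c ^ 4 ∧ b = 125 * d ^ 4 := by
  have hp5 : Prime (5:ℤ) := Nat.prime_iff_prime_int.mp (by norm_num)
  have hc5 : IsCoprime (5:ℤ) a := (hp5.coprime_iff_not_dvd.mpr h5)
  have hc125 : IsCoprime (125:ℤ) a := by
    have := hc5.pow_left (m := 3)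
    norm_num at this
    exact this
  have h125b : (125:ℤ) ∣ b := hc125.dvd_of_dvd_mul_left ⟨u ^ 4, h⟩
  obtain ⟨b', rfl⟩ := h125b
  have h' : a * b' = u ^ 4 := by
    apply mul_left_cancel₀ (show (125:ℤ) ≠ 0 by norm_num)
    linear_combination h
  have hab' : IsCoprime a b' := hab.of_isCoprime_of_dvd_right ⟨125, by ring⟩
  have hb'pos : 0 < b' := by nlinarith
  obtain ⟨c, d, rfl, rfl⟩ := pow4aux hab' h' ha hb'pos
  refine ⟨c, d, ?_, rfl, rfl⟩
  have h2 : (c ^ 2 * d ^ 2 - u ^ 2) * (c ^ 2 * d ^ 2 + u ^ 2) = 0 := by linear_combination h'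
  rcases mul_eq_zero.mp h2 with h3 | h3
  · linarith
  · nlinarith [sq_nonneg (c * d), sq_nonneg u]

/-- coprime product equal to `125 u⁴`, both positive: one factor is a 4th power,
the other 125 times a 4th power. -/
private lemma pow4 {a b u : ℤ} (hab : IsCoprime a b) (h : a * b = 125 * u ^ 4)
    (ha : 0 < a) (hb : 0 < b) :
    ∃ c d : ℤ, c ^ 2 * d ^ 2 = u ^ 2 ∧
      ((a = c ^ 4 ∧ b = 125 * d ^ 4) ∨ (a = 125 * d ^ 4 ∧ b = c ^ 4)) := by
  by_cases h5 : (5:ℤ) ∣ a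
  · have h5b : ¬ (5:ℤ) ∣ b := by
      intro hb5
      rcases Int.isUnit_iff.mp (hab.isUnit_of_dvd' h5 hb5) with h' | h' <;> norm_num at h'
    obtain ⟨c, d, hcd, h1, h2⟩ := pow4one hab.symm (by rw [mul_comm]; exact h) hb ha h5b
    exact ⟨c, d, hcd, Or.inr ⟨h2, h1⟩⟩
  · obtain ⟨c, d, hcd, h1, h2⟩ := pow4one hab h ha hb h5
    exact ⟨c, d, hcd, Or.inl ⟨h1, h2⟩⟩

private lemma kill1 : ∀ x y z : ZMod 16,
    z ^ 2 ≠ y ^ 4 - 50 * y ^ 2 * (2 * x + 1) ^ 2 + 125 * (2 * x + 1) ^ 4 := by decide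

private lemma kill2a : ∀ j i d : ZMod 16,
    (2 * j + 1) ^ 2 ≠ 25 * (i + i) ^ 2 * d ^ 2 - (i + i) ^ 4 - 125 * d ^ 4 := by decide

private lemma kill2b : ∀ j c i : ZMod 16,
    (2 * j + 1) ^ 2 ≠ 25 * c ^ 2 * (i + i) ^ 2 - c ^ 4 - 125 * (i + i) ^ 4 := by decide

private lemma kill3 : ∀ x i j : ZMod 32,
    4 * x ^ 2 ≠ (2 * i + 1) ^ 4 - 50 * (2 * i + 1) ^ 2 * (2 * j + 1) ^ 2
      + 125 * (2 * j + 1) ^ 4 := by decide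

private lemma stage2 (N : ℕ)
    (IH : ∀ u q r : ℤ, u.natAbs ≤ N → IsCoprime q u → ¬(5:ℤ) ∣ q →
      r ^ 2 = q ^ 4 - 50 * q ^ 2 * u ^ 2 + 125 * u ^ 4 → u = 0)
    {q u m n : ℤ} (hqu : IsCoprime q u) (h5q : ¬(5:ℤ) ∣ q) (hq_odd : Odd q)
    (hu0 : u ≠ 0) (hu_even : Even u) (huN : u.natAbs ≤ N + 1)
    (hmn : IsCoprime m n) (hmn2 : m ^ 2 * n ^ 2 = u ^ 2)
    (heq2 : q ^ 2 = m ^ 4 + 25 * m ^ 2 * n ^ 2 + 125 * n ^ 4) : False := by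
  have hp5 : Prime (5:ℤ) := Nat.prime_iff_prime_int.mp (by norm_num)
  have hm0 : m ≠ 0 := fun h0 => hu0 (sq_zero' (by rw [← hmn2, h0]; ring))
  have hn0 : n ≠ 0 := fun h0 => hu0 (sq_zero' (by rw [← hmn2, h0]; ring))
  rcases Int.even_or_odd n with hn_even | hn_odd
  · -- n even, m odd: deeper descent
    have hm_odd : Odd m := by
      rw [← Int.not_even_iff_odd]
      intro hm_even
      rcases Int.isUnit_iff.mp (hmn.isUnit_of_dvd' hm_even.two_dvd hn_even.two_dvd)
        with h' | h' <;> norm_num at h'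
    obtain ⟨w, hw⟩ := hn_even
    have hw0 : w ≠ 0 := fun h0 => hn0 (by rw [hw, h0]; ring)
    obtain ⟨e, he⟩ : Even (m ^ 2 - q) := by
      rw [Int.even_sub]
      exact iff_of_false (by simpa [parity_simps, Int.not_even_iff_odd] using hm_odd)
        (Int.not_even_iff_odd.mpr hq_odd)
    obtain ⟨f, hf⟩ : Even (m ^ 2 + q) := by
      rw [Int.even_add]
      exact iff_of_false (by simpa [parity_simps, Int.not_even_iff_odd] using hm_odd)
        (Int.not_even_iff_odd.mpr hq_odd)
    have hprod4 : (2 * e + 50 * w ^ 2) * (2 * f + 50 * w ^ 2) = 500 * w ^ 4 := by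
      linear_combination (-(m ^ 2 + q + 50 * w ^ 2)) * he + (-(2 * e + 50 * w ^ 2)) * hf +
        (-(25 * m ^ 2 * (n + 2 * w) + 125 * (n ^ 2 + 4 * w ^ 2) * (n + 2 * w))) * hw - heq2
    have hprod2 : (e + 25 * w ^ 2) * (f + 25 * w ^ 2) = 125 * w ^ 4 := by
      apply mul_left_cancel₀ (show (4:ℤ) ≠ 0 by norm_num)
      linear_combination hprod4
    have hsum2 : (e + 25 * w ^ 2) + (f + 25 * w ^ 2) = m ^ 2 + 50 * w ^ 2 := by linarith
    have hdiff2 : (f + 25 * w ^ 2) - (e + 25 * w ^ 2) = q := by linarith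
    have hw2pos : 0 < w ^ 2 := lt_of_lt_of_le one_pos (one_le_sq' hw0)
    have hpos : 0 < (e + 25 * w ^ 2) ∧ 0 < (f + 25 * w ^ 2) := by
      apply both_pos'
      · rw [hprod2]; nlinarith
      · rw [hsum2]; nlinarith [one_le_sq' hm0]
    have hcop2 : IsCoprime (e + 25 * w ^ 2) (f + 25 * w ^ 2) := by
      rw [Int.isCoprime_iff_gcd_eq_one]
      by_contra hg
      obtain ⟨p, hp, hpg⟩ := Nat.exists_prime_and_dvd hg
      have hpP : Prime (p:ℤ) := Nat.prime_iff_prime_int.mp hp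
      have hpa : (p:ℤ) ∣ (e + 25 * w ^ 2) :=
        dvd_trans (Int.natCast_dvd_natCast.mpr hpg) (Int.gcd_dvd_left _ _)
      have hpb : (p:ℤ) ∣ (f + 25 * w ^ 2) :=
        dvd_trans (Int.natCast_dvd_natCast.mpr hpg) (Int.gcd_dvd_right _ _)
      have hpq : (p:ℤ) ∣ q := hdiff2 ▸ dvd_sub hpb hpa
      have hpw : (p:ℤ) ∣ 125 * w ^ 4 := hprod2 ▸ hpa.mul_right _
      rcases hpP.dvd_mul.mp hpw with h1 | h1
      · have hdvd5 : (p:ℤ) ∣ 5 := hpP.dvd_of_dvd_pow (show (p:ℤ) ∣ 5 ^ 3 by norm_num [h1])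
        have hp5' : p = 5 := by
          have : p ∣ 5 := Int.ofNat_dvd.mp (by exact_mod_cast hdvd5)
          exact (Nat.prime_dvd_prime_iff_eq hp (by norm_num)).mp this
        subst hp5'
        exact h5q (by exact_mod_cast hpq)
      · have hpw' : (p:ℤ) ∣ w := hpP.dvd_of_dvd_pow h1
        have hpm : (p:ℤ) ∣ m := by
          apply hpP.dvd_of_dvd_pow (n := 2)
          have hsumdvd : (p:ℤ) ∣ (e + 25 * w ^ 2) + (f + 25 * w ^ 2) := dvd_add hpa hpb
          rw [hsum2] at hsumdvd
          have h50 : (p:ℤ) ∣ 50 * w ^ 2 := Dvd.dvd.mul_left (hpw'.pow (by norm_num)) 50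
          exact (dvd_add_right h50).mp (by rwa [add_comm] at hsumdvd)
        have hpn : (p:ℤ) ∣ n := by rw [hw]; exact dvd_add hpw' hpw'
        rcases Int.isUnit_iff.mp (hmn.isUnit_of_dvd' hpm hpn) with h' | h' <;>
          (have := hp.two_le; omega)
    obtain ⟨c, d, hcd2, hcase⟩ := pow4 hcop2 hprod2 hpos.1 hpos.2
    have hsum3 : m ^ 2 + 50 * w ^ 2 = c ^ 4 + 125 * d ^ 4 := by
      rcases hcase with ⟨h1, h2⟩ | ⟨h1, h2⟩ <;> rw [← hsum2, h1, h2] <;> ring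
    have hccop : IsCoprime c d := by
      rcases hcase with ⟨h1, h2⟩ | ⟨h1, h2⟩
      · exact (hcop2.of_isCoprime_of_dvd_left ⟨c ^ 3, by rw [h1]; ring⟩).of_isCoprime_of_dvd_right
          ⟨125 * d ^ 3, by rw [h2]; ring⟩
      · exact (hcop2.symm.of_isCoprime_of_dvd_left ⟨c ^ 3, by rw [h2]; ring⟩).of_isCoprime_of_dvd_right
          ⟨125 * d ^ 3, by rw [h1]; ring⟩
    have h5c : ¬ (5:ℤ) ∣ c := by
      intro h5c
      have hd1 : (5:ℤ) ∣ c ^ 4 := dvd_pow h5c (by norm_num)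
      have hd2 : (5:ℤ) ∣ 125 * d ^ 4 := ⟨25 * d ^ 4, by ring⟩
      have hunit : IsUnit (5:ℤ) := by
        rcases hcase with ⟨h1, h2⟩ | ⟨h1, h2⟩
        · exact hcop2.isUnit_of_dvd' (h1 ▸ hd1) (h2 ▸ hd2)
        · exact hcop2.isUnit_of_dvd' (h1 ▸ hd2) (h2 ▸ hd1)
      rcases Int.isUnit_iff.mp hunit with h' | h' <;> norm_num at h'
    have hd0 : d ≠ 0 := fun h0 => hw0 (sq_zero' (by rw [← hcd2, h0]; ring))
    have hc0 : c ≠ 0 := fun h0 => hw0 (sq_zero' (by rw [← hcd2, h0]; ring))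
    have heq3 : m ^ 2 = c ^ 4 - 50 * c ^ 2 * d ^ 2 + 125 * d ^ 4 := by
      linear_combination hsum3 + 50 * hcd2
    have hn2 : n ^ 2 = 4 * w ^ 2 := by rw [hw]; ring
    have hd2le : d ^ 2 ≤ w ^ 2 := by nlinarith [one_le_sq' hc0, sq_nonneg d]
    have hdu : d ^ 2 < u ^ 2 := by
      nlinarith [one_le_sq' hm0, one_le_sq' hd0, sq_nonneg w]
    have hNle : d.natAbs ≤ N := by
      have h1 : (d.natAbs : ℤ) ^ 2 < (u.natAbs : ℤ) ^ 2 := by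
        rw [Int.natAbs_sq, Int.natAbs_sq]; exact hdu
      have h2 : d.natAbs < u.natAbs :=
        (Nat.pow_lt_pow_iff_left (n := 2) (by norm_num)).mp (by exact_mod_cast h1)
      omega
    exact hd0 (IH d c m hNle hccop h5c heq3)
  · -- n odd: terminal contradiction mod 32
    have hA : (2*m^2+25*n^2-2*q) * (2*m^2+25*n^2+2*q) = 125 * n ^ 4 := by
      linear_combination (-4) * heq2
    have hn2pos : 0 < n ^ 2 := lt_of_lt_of_le one_pos (one_le_sq' hn0)
    have hApos : 0 < (2*m^2+25*n^2-2*q) ∧ 0 < (2*m^2+25*n^2+2*q) := by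
      apply both_pos'
      · rw [hA]; nlinarith
      · nlinarith [one_le_sq' hm0]
    have hcopA : IsCoprime (2*m^2+25*n^2-2*q) (2*m^2+25*n^2+2*q) := by
      rw [Int.isCoprime_iff_gcd_eq_one]
      by_contra hg
      obtain ⟨p, hp, hpg⟩ := Nat.exists_prime_and_dvd hg
      have hpP : Prime (p:ℤ) := Nat.prime_iff_prime_int.mp hp
      have hpa : (p:ℤ) ∣ (2*m^2+25*n^2-2*q) :=
        dvd_trans (Int.natCast_dvd_natCast.mpr hpg) (Int.gcd_dvd_left _ _)
      have hpb : (p:ℤ) ∣ (2*m^2+25*n^2+2*q) :=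
        dvd_trans (Int.natCast_dvd_natCast.mpr hpg) (Int.gcd_dvd_right _ _)
      have hpq4 : (p:ℤ) ∣ 4 * q := by
        have hd := dvd_sub hpb hpa
        have h4q : (2*m^2+25*n^2+2*q) - (2*m^2+25*n^2-2*q) = 4 * q := by ring
        rwa [h4q] at hd
      have hpn125 : (p:ℤ) ∣ 125 * n ^ 4 := hA ▸ hpa.mul_right _
      rcases hpP.dvd_mul.mp hpn125 with h1 | h1
      · -- p ∣ 125 hence p = 5
        have hdvd5 : (p:ℤ) ∣ 5 := hpP.dvd_of_dvd_pow (show (p:ℤ) ∣ 5 ^ 3 by norm_num [h1])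
        have hp5' : p = 5 := by
          have : p ∣ 5 := Int.ofNat_dvd.mp (by exact_mod_cast hdvd5)
          exact (Nat.prime_dvd_prime_iff_eq hp (by norm_num)).mp this
        subst hp5'
        rcases (Nat.prime_iff_prime_int.mp (by norm_num : Nat.Prime 5)).dvd_mul.mp
            (by exact_mod_cast hpq4) with h2 | h2
        · norm_num at h2
        · exact h5q (by exact_mod_cast h2)
      · have hpn : (p:ℤ) ∣ n := hpP.dvd_of_dvd_pow h1
        have hp_ne2 : (p:ℤ) ≠ 2 := by
          intro h2
          apply Int.not_even_iff_odd.mpr hn_odd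
          obtain ⟨k, hk⟩ := h2 ▸ hpn
          exact ⟨k, by linarith⟩
        have hpsum : (p:ℤ) ∣ 4 * m ^ 2 := by
          have hd := dvd_add hpa hpb
          have hs : (2*m^2+25*n^2-2*q) + (2*m^2+25*n^2+2*q) = 4*m^2 + 50*n^2 := by ring
          rw [hs] at hd
          have h50 : (p:ℤ) ∣ 50 * n ^ 2 := Dvd.dvd.mul_left (hpn.pow (by norm_num)) 50
          exact (dvd_add_right h50).mp (by rwa [add_comm] at hd)
        rcases hpP.dvd_mul.mp hpsum with h2 | h2
        · have hpd2 : (p:ℤ) ∣ 2 := hpP.dvd_of_dvd_pow (show (p:ℤ) ∣ 2 ^ 2 by norm_num [h2])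
          have hp2n : p ∣ 2 := Int.ofNat_dvd.mp (by exact_mod_cast hpd2)
          have hp2e : p = 2 := (Nat.prime_dvd_prime_iff_eq hp (by norm_num)).mp hp2n
          subst hp2e
          exact hp_ne2 (by norm_num)
        · have hpm : (p:ℤ) ∣ m := hpP.dvd_of_dvd_pow h2
          rcases Int.isUnit_iff.mp (hmn.isUnit_of_dvd' hpm hpn) with h' | h' <;>
            (have := hp.two_le; omega)
    obtain ⟨c, d, hcd2, hcase⟩ := pow4 hcopA hA hApos.1 hApos.2
    have hsum4 : 4 * m ^ 2 + 50 * n ^ 2 = c ^ 4 + 125 * d ^ 4 := by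
      rcases hcase with ⟨h1, h2⟩ | ⟨h1, h2⟩ <;>
        [skip; skip] <;>
        · have := congrArg₂ (· + ·) h1.symm h2.symm
          linarith [this, (by ring : (2*m^2+25*n^2-2*q) + (2*m^2+25*n^2+2*q) = 4*m^2+50*n^2)]
    have heq4 : 4 * m ^ 2 = c ^ 4 - 50 * c ^ 2 * d ^ 2 + 125 * d ^ 4 := by
      linear_combination hsum4 + 50 * hcd2
    have hcd_odd : Odd (c ^ 2 * d ^ 2) := by
      rw [hcd2]
      simpa [parity_simps, Int.not_even_iff_odd] using hn_odd
    have hc_odd : Odd c := by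
      rcases Int.even_or_odd c with hc | hc
      · exfalso
        apply Int.not_even_iff_odd.mpr hcd_odd
        simp only [Int.even_mul, Int.even_pow]
        exact Or.inl ⟨hc, by norm_num⟩
      · exact hc
    have hd_odd : Odd d := by
      rcases Int.even_or_odd d with hd | hd
      · exfalso
        apply Int.not_even_iff_odd.mpr hcd_odd
        simp only [Int.even_mul, Int.even_pow]
        exact Or.inr ⟨hd, by norm_num⟩
      · exact hd
    obtain ⟨i, hi⟩ := hc_odd
    obtain ⟨j, hj⟩ := hd_odd
    rw [hi, hj] at heq4
    have h32 : 4 * (m : ZMod 32) ^ 2 = (2 * (i : ZMod 32) + 1) ^ 4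
        - 50 * (2 * (i : ZMod 32) + 1) ^ 2 * (2 * (j : ZMod 32) + 1) ^ 2
        + 125 * (2 * (j : ZMod 32) + 1) ^ 4 := by
      exact_mod_cast congrArg (fun t : ℤ => (t : ZMod 32)) heq4
    exact kill3 _ _ _ h32

private lemma key : ∀ N : ℕ, ∀ u q r : ℤ, u.natAbs ≤ N → IsCoprime q u → ¬(5:ℤ) ∣ q →
    r ^ 2 = q ^ 4 - 50 * q ^ 2 * u ^ 2 + 125 * u ^ 4 → u = 0 := by
  intro N
  induction N with
  | zero =>
    intro u q r hN _ _ _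
    exact Int.natAbs_eq_zero.mp (Nat.le_zero.mp hN)
  | succ N IH =>
    intro u q r hN hqu h5q h
    rcases eq_or_ne u 0 with h0 | hu0
    · exact h0
    exfalso
    rcases Int.even_or_odd u with hu_even | hu_odd
    swap
    · -- u odd: impossible mod 16
      obtain ⟨k, hk⟩ := hu_odd
      rw [hk] at h
      have h16 : ((r : ZMod 16)) ^ 2 = (q : ZMod 16) ^ 4 - 50 * (q : ZMod 16) ^ 2 *
          (2 * (k : ZMod 16) + 1) ^ 2 + 125 * (2 * (k : ZMod 16) + 1) ^ 4 := by
        exact_mod_cast congrArg (fun t : ℤ => (t : ZMod 16)) h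
      exact kill1 _ _ _ h16
    · -- u even
      have hu2pos : 0 < u ^ 2 := lt_of_lt_of_le one_pos (one_le_sq' hu0)
      obtain ⟨v, hv⟩ := hu_even
      have hq_odd : Odd q := by
        rcases Int.even_or_odd q with hq | hq
        · exfalso
          rcases Int.isUnit_iff.mp (hqu.isUnit_of_dvd' hq.two_dvd (by exact ⟨v, hv⟩ : Even u).two_dvd)
            with h' | h' <;> norm_num at h'
        · exact hq
      obtain ⟨y, hy⟩ := hq_odd
      have hr_odd : Odd r := by
        rcases Int.even_or_odd r with hr | hr
        · exfalso
          obtain ⟨s, hs⟩ := hr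
          rw [hs, hy, hv] at h
          have h4 : ∀ (s yy vv : ZMod 4),
              (s + s) ^ 2 ≠ (2*yy+1) ^ 4 - 50 * (2*yy+1) ^ 2 * (vv+vv) ^ 2
                + 125 * (vv+vv) ^ 4 := by decide
          exact h4 (s : ZMod 4) (y : ZMod 4) (v : ZMod 4)
            (by exact_mod_cast congrArg (fun t : ℤ => (t : ZMod 4)) h)
        · exact hr
      obtain ⟨s, hs⟩ := hr_odd
      -- split r^2 = (q^2-25u^2)^2 - 500 u^4
      obtain ⟨a, ha⟩ : ∃ a, q ^ 2 - 25 * u ^ 2 - r = a + a :=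
        ⟨2*y^2 + 2*y - 50*v^2 - s, by rw [hy, hv, hs]; ring⟩
      obtain ⟨b, hb⟩ : ∃ b, q ^ 2 - 25 * u ^ 2 + r = b + b :=
        ⟨2*y^2 + 2*y - 50*v^2 + s + 1, by rw [hy, hv, hs]; ring⟩
      have hab_prod : a * b = 125 * u ^ 4 := by
        apply mul_left_cancel₀ (show (4:ℤ) ≠ 0 by norm_num)
        linear_combination (-(a + a)) * hb - (q ^ 2 - 25 * u ^ 2 + r) * ha - h
      have hab_sum : a + b = q ^ 2 - 25 * u ^ 2 := by linarith
      have hprod_pos : 0 < a * b := by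
        rw [hab_prod]; nlinarith
      have hcop : IsCoprime a b := by
        rw [Int.isCoprime_iff_gcd_eq_one]
        by_contra hg
        obtain ⟨p, hp, hpg⟩ := Nat.exists_prime_and_dvd hg
        have hpP : Prime (p:ℤ) := Nat.prime_iff_prime_int.mp hp
        have hpa : (p:ℤ) ∣ a := dvd_trans (Int.natCast_dvd_natCast.mpr hpg) (Int.gcd_dvd_left _ _)
        have hpb : (p:ℤ) ∣ b := dvd_trans (Int.natCast_dvd_natCast.mpr hpg) (Int.gcd_dvd_right _ _)
        have hpu125 : (p:ℤ) ∣ 125 * u ^ 4 := hab_prod ▸ hpa.mul_right _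
        have hpq2 : ((p:ℤ) ∣ u) → ((p:ℤ) ∣ q) := by
          intro hpu
          apply hpP.dvd_of_dvd_pow (n := 2)
          have h25 : (p:ℤ) ∣ 25 * u ^ 2 := Dvd.dvd.mul_left (hpu.pow (by norm_num)) 25
          have hq2 : q ^ 2 = (a + b) + 25 * u ^ 2 := by linarith
          rw [hq2]
          exact dvd_add (dvd_add hpa hpb) h25
        rcases hpP.dvd_mul.mp hpu125 with h1 | h1
        · have hdvd5 : (p:ℤ) ∣ 5 := hpP.dvd_of_dvd_pow (show (p:ℤ) ∣ 5 ^ 3 by norm_num [h1])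
          have hp5' : p = 5 := by
            have : p ∣ 5 := Int.ofNat_dvd.mp (by exact_mod_cast hdvd5)
            exact (Nat.prime_dvd_prime_iff_eq hp (by norm_num)).mp this
          subst hp5'
          apply h5q
          apply (Nat.prime_iff_prime_int.mp (by norm_num : Nat.Prime 5)).dvd_of_dvd_pow (n := 2)
          have h25 : (5:ℤ) ∣ 25 * u ^ 2 := ⟨5 * u ^ 2, by ring⟩
          have hq2 : q ^ 2 = (a + b) + 25 * u ^ 2 := by linarith
          rw [hq2]
          exact dvd_add (dvd_add (by exact_mod_cast hpa) (by exact_mod_cast hpb)) h25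
        · have hpu : (p:ℤ) ∣ u := hpP.dvd_of_dvd_pow h1
          rcases Int.isUnit_iff.mp (hqu.isUnit_of_dvd' (hpq2 hpu) hpu) with h' | h' <;>
            (have := hp.two_le; omega)
      have ha0 : a ≠ 0 := by
        intro h0
        rw [h0, zero_mul] at hprod_pos
        exact lt_irrefl 0 hprod_pos
      rcases lt_or_gt_of_ne ha0 with haneg | hapos
      · -- a < 0, b < 0 : negative case, impossible mod 16
        have hbneg : b < 0 := by nlinarith
        have hcopn : IsCoprime (-a) (-b) := hcop.neg_left.neg_right
        have hprodn : (-a) * (-b) = 125 * u ^ 4 := by linear_combination hab_prod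
        obtain ⟨c, d, hcd, hcase⟩ := pow4 hcopn hprodn (by linarith) (by linarith)
        have heqn : q ^ 2 = 25 * c ^ 2 * d ^ 2 - c ^ 4 - 125 * d ^ 4 := by
          rcases hcase with ⟨h1, h2⟩ | ⟨h1, h2⟩
          · linear_combination (-1) * hab_sum + (-1) * h1 + (-1) * h2 - 25 * hcd
          · linear_combination (-1) * hab_sum + (-1) * h1 + (-1) * h2 - 25 * hcd
        have hev : Even c ∨ Even d := by
          have hcd_even : Even (c ^ 2 * d ^ 2) := by
            rw [hcd, hv]
            exact ⟨2*v^2, by ring⟩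
          rcases Int.even_mul.mp hcd_even with h1 | h1
          · exact Or.inl (Int.even_pow.mp h1).1
          · exact Or.inr (Int.even_pow.mp h1).1
        rcases hev with ⟨i, hi⟩ | ⟨i, hi⟩
        · rw [hy, hi] at heqn
          exact kill2a (y : ZMod 16) (i : ZMod 16) (d : ZMod 16)
            (by exact_mod_cast congrArg (fun t : ℤ => (t : ZMod 16)) heqn)
        · rw [hy, hi] at heqn
          exact kill2b (y : ZMod 16) (c : ZMod 16) (i : ZMod 16)
            (by exact_mod_cast congrArg (fun t : ℤ => (t : ZMod 16)) heqn)
      · -- a > 0 : descend via stage2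
        have hbpos : 0 < b := by nlinarith
        obtain ⟨mm, nn, hcd, hcase⟩ := pow4 hcop hab_prod hapos hbpos
        have heq2 : q ^ 2 = mm ^ 4 + 25 * mm ^ 2 * nn ^ 2 + 125 * nn ^ 4 := by
          rcases hcase with ⟨h1, h2⟩ | ⟨h1, h2⟩
          · linear_combination (-1) * hab_sum + h1 + h2 - 25 * hcd
          · linear_combination (-1) * hab_sum + h1 + h2 - 25 * hcd
        have hcopmn : IsCoprime mm nn := by
          rcases hcase with ⟨h1, h2⟩ | ⟨h1, h2⟩
          · exact (hcop.of_isCoprime_of_dvd_left ⟨mm ^ 3, by rw [h1]; ring⟩).of_isCoprime_of_dvd_right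
              ⟨125 * nn ^ 3, by rw [h2]; ring⟩
          · exact (hcop.symm.of_isCoprime_of_dvd_left ⟨mm ^ 3, by rw [h2]; ring⟩).of_isCoprime_of_dvd_right
              ⟨125 * nn ^ 3, by rw [h1]; ring⟩
        exact stage2 N IH hqu h5q ⟨y, hy⟩ hu0 ⟨v, hv⟩ hN hcopmn hcd heq2

/-- The only rational points on the genus 1 curve `5Y² = X⁴ − 10X² + 5` are
`(X, Y) = (0, 1)` and `(0, −1)`. -/
theorem stmt_11 (X Y : ℚ) (h : 5 * Y ^ 2 = X ^ 4 - 10 * X ^ 2 + 5) :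
    X = 0 ∧ (Y = 1 ∨ Y = -1) := by
  have hp5 : Prime (5:ℤ) := Nat.prime_iff_prime_int.mp (by norm_num)
  have hXden : ((X.den : ℚ)) ≠ 0 := by
    exact_mod_cast X.den_nz
  have hXnum : (X.num : ℚ) = X * (X.den : ℚ) := by
    have h0 := Rat.num_div_den X
    rwa [div_eq_iff hXden] at h0
  set Z : ℚ := Y * ((X.den : ℚ)) ^ 2 with hZdef
  have hq : 5 * Z ^ 2 =
      ((X.num ^ 4 - 10 * X.num ^ 2 * (X.den : ℤ) ^ 2 + 5 * (X.den : ℤ) ^ 4 : ℤ) : ℚ) := by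
    push_cast
    rw [hZdef]
    linear_combination ((X.den : ℚ) ^ 4) * h +
      (-( (X.num:ℚ)^3 + (X.num:ℚ)^2 * (X * (X.den:ℚ)) + (X.num:ℚ) * (X * (X.den:ℚ))^2
        + (X * (X.den:ℚ))^3) + 10 * (X.den:ℚ)^2 * ((X.num:ℚ) + X * (X.den:ℚ))) * hXnum
  have hZnum : (Z.num : ℚ) = Z * (Z.den : ℚ) := by
    have h0 := Rat.num_div_den Z
    rwa [div_eq_iff (by exact_mod_cast Z.den_nz : ((Z.den:ℚ)) ≠ 0)] at h0
  have hZint : (5 * Z.num ^ 2 : ℚ) =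
      ((X.num ^ 4 - 10 * X.num ^ 2 * (X.den : ℤ) ^ 2 + 5 * (X.den : ℤ) ^ 4 : ℤ) : ℚ)
        * ((Z.den : ℚ)) ^ 2 := by
    rw [hZnum]
    linear_combination ((Z.den : ℚ) ^ 2) * hq
  have hZint' : 5 * Z.num ^ 2 =
      (X.num ^ 4 - 10 * X.num ^ 2 * (X.den : ℤ) ^ 2 + 5 * (X.den : ℤ) ^ 4) * (Z.den : ℤ) ^ 2 := by
    exact_mod_cast hZint
  -- Z is an integer
  have hZcop : IsCoprime (Z.num) ((Z.den : ℤ)) := by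
    rw [Int.isCoprime_iff_gcd_eq_one]
    exact_mod_cast Z.reduced
  have hdvd : ((Z.den : ℤ)) ^ 2 ∣ 5 := by
    have hd5 : ((Z.den : ℤ)) ^ 2 ∣ 5 * Z.num ^ 2 := by
      rw [hZint']
      exact Dvd.intro_left _ rfl
    exact (hZcop.symm.pow (m := 2) (n := 2)).dvd_of_dvd_mul_right hd5
  have hZden1 : (Z.den : ℤ) ^ 2 = 1 := by
    have h1 : (Z.den : ℤ) ^ 2 ≤ 5 := Int.le_of_dvd (by norm_num) hdvd
    have h2 : 0 < Z.den := Z.pos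
    have h3 : (Z.den : ℤ) ≤ 2 := by nlinarith [(by exact_mod_cast h2 : (0:ℤ) < (Z.den:ℤ))]
    have h4 : Z.den = 1 ∨ Z.den = 2 := by omega
    rcases h4 with h4 | h4 <;> rw [h4] at hdvd ⊢
    · norm_num
    · exfalso; norm_num at hdvd
  have hmain : 5 * Z.num ^ 2 =
      X.num ^ 4 - 10 * X.num ^ 2 * (X.den : ℤ) ^ 2 + 5 * (X.den : ℤ) ^ 4 := by
    rw [hZint', hZden1]; ring
  -- 5 divides X.num
  have h5num : (5:ℤ) ∣ X.num := by
    apply hp5.dvd_of_dvd_pow (n := 4)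
    exact ⟨Z.num ^ 2 + 2 * X.num ^ 2 * (X.den : ℤ) ^ 2 - (X.den : ℤ) ^ 4, by linarith⟩
  obtain ⟨u, hu⟩ := h5num
  have hfinal : Z.num ^ 2 =
      (X.den : ℤ) ^ 4 - 50 * (X.den : ℤ) ^ 2 * u ^ 2 + 125 * u ^ 4 := by
    apply mul_left_cancel₀ (show (5:ℤ) ≠ 0 by norm_num)
    linear_combination hmain + (125 * u ^ 3 + 25 * u ^ 2 * X.num + 5 * u * X.num ^ 2
      + X.num ^ 3 - 10 * X.num * (X.den:ℤ)^2 - 50 * u * (X.den:ℤ)^2) * hu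
  have hXcop : IsCoprime ((X.den : ℤ)) X.num := by
    rw [Int.isCoprime_iff_gcd_eq_one, Int.gcd_comm]
    exact_mod_cast X.reduced
  have hqu : IsCoprime ((X.den : ℤ)) u :=
    hXcop.of_isCoprime_of_dvd_right ⟨5, by rw [hu]; ring⟩
  have h5q : ¬ (5:ℤ) ∣ (X.den : ℤ) := by
    intro h5d
    rcases Int.isUnit_iff.mp (hXcop.isUnit_of_dvd' h5d (hu ▸ ⟨u, rfl⟩)) with h' | h' <;>
      norm_num at h'
  have hu0 : u = 0 := key u.natAbs u (X.den : ℤ) Z.num le_rfl hqu h5q hfinal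
  have hX0 : X = 0 := by
    rw [← Rat.num_eq_zero]
    rw [hu, hu0]; ring
  refine ⟨hX0, ?_⟩
  rw [hX0] at h
  have hY2 : Y ^ 2 = 1 := by nlinarith
  have : (Y - 1) * (Y + 1) = 0 := by linear_combination hY2
  rcases mul_eq_zero.mp this with h' | h'
  · exact Or.inl (by linarith)
  · exact Or.inr (by linarith)
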